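/- For the canonical nonlinear connection M^{(j)}_{(β)α} = −H^γ_{αβ} x^j_γ attached to a semi-Riemannian temporal metric h with Christoffel symbols H^γ_{αβ}, the torsion component R^{(m)}_{(μ)αβ} = δM^{(m)}_{(μ)α}/δt^β − δM^{(m)}_{(μ)β}/δt^α equals −H^γ_{μαβ} x^m_γ, where H^γ_{μαβ} is the curvature tensor of h and δ/δt^α = ∂/∂t^α − M^{(j)}_{(β)α} ∂/∂x^j_β. -/

import Mathlib

/-- Partial derivative of `f : (ι → ℝ) → ℝ` in the `i`-th coordinate direction. -/
noncomputable def pd {ι : Type*} [DecidableEq ι] (i : ι) (f : (ι → ℝ) → ℝ) (t : ι → ℝ) : ℝ :=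
  deriv (fun s => f (Function.update t i s)) (t i)

/-- Partial derivative `∂/∂t^α` of a function of `(t, x^i_α)`. -/
noncomputable def tpd {p n : ℕ} (α : Fin p)
    (F : (Fin p → ℝ) → (Fin n × Fin p → ℝ) → ℝ) (t : Fin p → ℝ) (X : Fin n × Fin p → ℝ) : ℝ :=
  deriv (fun s => F (Function.update t α s) X) (t α)

/-- Partial derivative `∂/∂x^j_β` of a function of `(t, x^i_α)`. -/
noncomputable def xpd {p n : ℕ} (j : Fin n) (β : Fin p)
    (F : (Fin p → ℝ) → (Fin n × Fin p → ℝ) → ℝ) (t : Fin p → ℝ) (X : Fin n × Fin p → ℝ) : ℝ :=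
  deriv (fun s => F t (Function.update X (j, β) s)) (X (j, β))

/-- Adapted derivative `δ/δt^α = ∂/∂t^α − M^{(j)}_{(ε)α} ∂/∂x^j_ε`. -/
noncomputable def deltat {p n : ℕ}
    (M : Fin n → Fin p → Fin p → (Fin p → ℝ) → (Fin n × Fin p → ℝ) → ℝ)
    (α : Fin p) (F : (Fin p → ℝ) → (Fin n × Fin p → ℝ) → ℝ)
    (t : Fin p → ℝ) (X : Fin n × Fin p → ℝ) : ℝ :=
  tpd α F t X - ∑ j, ∑ ε, M j ε α t X * xpd j ε F t X

/-- For the canonical nonlinear connection `M^{(j)}_{(β)α} = −H^γ_{αβ} x^j_γ`, the torsion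
component `R^{(m)}_{(μ)αβ} = δM^{(m)}_{(μ)α}/δt^β − δM^{(m)}_{(μ)β}/δt^α` equals
`−H^γ_{μαβ} x^m_γ`, where `H^γ_{μαβ}` is the curvature of `h`. -/
theorem canonical_temporal_torsion {p n : ℕ}
    (H : Fin p → Fin p → Fin p → (Fin p → ℝ) → ℝ)
    (hsmooth : ∀ γ α β, ContDiff ℝ 2 (H γ α β))
    (hsym : ∀ γ α β, H γ α β = H γ β α)
    (M : Fin n → Fin p → Fin p → (Fin p → ℝ) → (Fin n × Fin p → ℝ) → ℝ)
    (hM : ∀ j β α t X, M j β α t X = -∑ γ, H γ α β t * X (j, γ))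
    (Hcurv : Fin p → Fin p → Fin p → Fin p → (Fin p → ℝ) → ℝ)
    (hHcurv : ∀ γ μ α β t, Hcurv γ μ α β t =
      pd β (H γ μ α) t - pd α (H γ μ β) t +
        ∑ ε, (H ε μ α t * H γ ε β t - H ε μ β t * H γ ε α t))
    (R : Fin n → Fin p → Fin p → Fin p → (Fin p → ℝ) → (Fin n × Fin p → ℝ) → ℝ)
    (hR : ∀ m μ α β t X, R m μ α β t X =
      deltat M β (M m μ α) t X - deltat M α (M m μ β) t X) :
    ∀ m μ α β t X, R m μ α β t X = -∑ γ, Hcurv γ μ α β t * X (m, γ) := by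
  intro m μ α β t X
  have hsym' : ∀ γ α β t, H γ α β t = H γ β α t := fun γ α β t => congrFun (hsym γ α β) t
  -- derivative of H along a coordinate line
  have hdH : ∀ γ α' β' (t : Fin p → ℝ) (δ : Fin p),
      HasDerivAt (fun s => H γ α' β' (Function.update t δ s)) (pd δ (H γ α' β') t) (t δ) := by
    intro γ α' β' t δ
    have h1 : DifferentiableAt ℝ (fun s => H γ α' β' (Function.update t δ s)) (t δ) := by
      exact (((hsmooth γ α' β').differentiable (by norm_num)).differentiableAt).comp _
        (((contDiff_update 1 t δ).differentiable one_ne_zero).differentiableAt)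
    simpa [pd] using h1.hasDerivAt
  -- value of tpd on M
  have htpd : ∀ m' μ' α' β' (t : Fin p → ℝ) X,
      tpd β' (M m' μ' α') t X = -∑ γ, pd β' (H γ α' μ') t * X (m', γ) := by
    intro m' μ' α' β' t X
    have hF : (fun s => M m' μ' α' (Function.update t β' s) X)
        = fun s => -∑ γ, H γ α' μ' (Function.update t β' s) * X (m', γ) := by
      funext s; exact hM m' μ' α' _ X
    rw [tpd, hF]
    exact ((HasDerivAt.fun_sum fun γ _ => (hdH γ α' μ' t β').mul_const _).neg).deriv
  -- value of xpd on M
  have hxpd : ∀ m' μ' α' (j : Fin n) (ε : Fin p) (t : Fin p → ℝ) X,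
      xpd j ε (M m' μ' α') t X = -(if m' = j then H ε α' μ' t else 0) := by
    intro m' μ' α' j ε t X
    have hF : (fun s => M m' μ' α' t (Function.update X (j, ε) s))
        = fun s => -∑ γ, H γ α' μ' t * (if (m', γ) = (j, ε) then s else X (m', γ)) := by
      funext s
      rw [hM]
      simp [Function.update_apply]
    rw [xpd, hF]
    have hd : HasDerivAt
        (fun s => -∑ γ, H γ α' μ' t * (if (m', γ) = (j, ε) then s else X (m', γ)))
        (-∑ γ, H γ α' μ' t * (if (m', γ) = (j, ε) then (1:ℝ) else 0)) (X (j, ε)) := by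
      refine (HasDerivAt.fun_sum fun γ _ => ?_).neg
      by_cases h : (m', γ) = (j, ε)
      · simpa [h] using (hasDerivAt_id (X (j, ε))).const_mul (H γ α' μ' t)
      · simpa [h] using (hasDerivAt_const (X (j, ε)) (H γ α' μ' t * X (m', γ)))
    rw [hd.deriv]
    by_cases h : m' = j
    · simp [Prod.ext_iff, h, Finset.sum_ite_eq, mul_ite]
    · simp [Prod.ext_iff, h]
  -- value of deltat on M
  have hdel : ∀ μ' α' β' (t : Fin p → ℝ) X,
      deltat M β' (M m μ' α') t X =
        -∑ γ, pd β' (H γ α' μ') t * X (m, γ)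
          - ∑ γ, ∑ ε, H γ β' ε t * X (m, γ) * H ε α' μ' t := by
    intro μ' α' β' t X
    rw [deltat, htpd]
    congr 1
    have this1 : ∀ j : Fin n, ∑ ε, M j ε β' t X * xpd j ε (M m μ' α') t X
        = if m = j then ∑ ε, (∑ γ, H γ β' ε t * X (m, γ)) * H ε α' μ' t else 0 := by
      intro j
      by_cases h : m = j
      · subst h
        rw [if_pos rfl]
        refine Finset.sum_congr rfl fun ε _ => ?_
        rw [hxpd, hM, if_pos rfl]
        ring
      · rw [if_neg h]
        refine Finset.sum_eq_zero fun ε _ => ?_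
        rw [hxpd, if_neg h]
        ring
    have hh : ∑ j, ∑ ε, M j ε β' t X * xpd j ε (M m μ' α') t X
        = ∑ j : Fin n, if m = j then ∑ ε, (∑ γ, H γ β' ε t * X (m, γ)) * H ε α' μ' t else 0 :=
      Finset.sum_congr rfl fun j _ => this1 j
    rw [hh, Finset.sum_ite_eq, if_pos (Finset.mem_univ m)]
    simp only [Finset.sum_mul]
    exact Finset.sum_comm
  -- curvature in symmetric-normalized form
  have hcurv' : ∀ γ, Hcurv γ μ α β t =
      pd β (H γ α μ) t - pd α (H γ β μ) t
        + ∑ ε, (H ε α μ t * H γ β ε t - H ε β μ t * H γ α ε t) := by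
    intro γ
    rw [hHcurv, hsym γ μ α, hsym γ μ β]
    congr 1
    refine Finset.sum_congr rfl fun ε _ => ?_
    rw [hsym' ε μ α, hsym' γ ε β, hsym' ε μ β, hsym' γ ε α]
  rw [hR m μ α β t X, hdel μ α β t X, hdel μ β α t X]
  simp only [hcurv']
  have h2 : ∀ γ, (pd β (H γ α μ) t - pd α (H γ β μ) t
        + ∑ ε, (H ε α μ t * H γ β ε t - H ε β μ t * H γ α ε t)) * X (m, γ)
      = pd β (H γ α μ) t * X (m, γ) - pd α (H γ β μ) t * X (m, γ)
        + (∑ ε, H γ β ε t * X (m, γ) * H ε α μ t - ∑ ε, H γ α ε t * X (m, γ) * H ε β μ t) := by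
    intro γ
    rw [add_mul, sub_mul, Finset.sum_mul, ← Finset.sum_sub_distrib]
    congr 1
    exact Finset.sum_congr rfl fun ε _ => by ring
  have h3 : ∑ γ, (pd β (H γ α μ) t - pd α (H γ β μ) t
        + ∑ ε, (H ε α μ t * H γ β ε t - H ε β μ t * H γ α ε t)) * X (m, γ)
      = ∑ γ, (pd β (H γ α μ) t * X (m, γ) - pd α (H γ β μ) t * X (m, γ)
        + (∑ ε, H γ β ε t * X (m, γ) * H ε α μ t - ∑ ε, H γ α ε t * X (m, γ) * H ε β μ t)) :=
    Finset.sum_congr rfl fun γ _ => h2 γ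
  rw [h3]
  simp only [Finset.sum_add_distrib, Finset.sum_sub_distrib]
  ring
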